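/- arXiv:1310.3439 — 3 statements merged into one kernel-verified Lean document; each statement's English description precedes it below -/
import Mathlib

section
/- Let n ≥ 1 be a natural number, let δ > 0, Λ ≥ 1, K₁ ≥ 0, K₂ ≥ 0 be real numbers, and set ε := δ/(4·n⁴·Λ²). Let H, μ, a be real numbers with H > 0, (1+δ)·H ≤ μ ≤ Λ·H, and a² ≤ (1+ε)·H² + K₂. Then H·μ² − a²·μ − n³·(n·ε·μ + K₁)·μ² ≥ (δ/2)·H²·μ − n³·K₁·Λ²·H² − K₂·Λ·H. -/
set_option maxHeartbeats 1000000

/-- The key pointwise estimate in the proof of Proposition 4.1. -/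
theorem key_pointwise_estimate (n : ℕ) (hn : 1 ≤ n) (δ Λ K₁ K₂ H μ a : ℝ)
    (hδ : 0 < δ) (hΛ : 1 ≤ Λ) (hK₁ : 0 ≤ K₁) (hK₂ : 0 ≤ K₂) (hH : 0 < H)
    (hμ₁ : (1 + δ) * H ≤ μ) (hμ₂ : μ ≤ Λ * H)
    (ha : a ^ 2 ≤ (1 + δ / (4 * (n : ℝ) ^ 4 * Λ ^ 2)) * H ^ 2 + K₂) :
    H * μ ^ 2 - a ^ 2 * μ - (n : ℝ) ^ 3 *
        ((n : ℝ) * (δ / (4 * (n : ℝ) ^ 4 * Λ ^ 2)) * μ + K₁) * μ ^ 2 ≥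
      (δ / 2) * H ^ 2 * μ - (n : ℝ) ^ 3 * K₁ * Λ ^ 2 * H ^ 2 - K₂ * Λ * H := by
  set N : ℝ := (n : ℝ) with hN
  have hN1 : (1 : ℝ) ≤ N := by rw [hN]; exact_mod_cast hn
  have hden : 0 < 4 * N ^ 4 * Λ ^ 2 := by positivity
  set ε : ℝ := δ / (4 * N ^ 4 * Λ ^ 2) with hε
  have hεpos : 0 < ε := by positivity
  have hεeq : ε * (4 * N ^ 4 * Λ ^ 2) = δ := div_mul_cancel₀ δ (ne_of_gt hden)
  have hμpos : 0 < μ := lt_of_lt_of_le (by nlinarith) hμ₁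
  have hμ2 : μ ^ 2 ≤ Λ ^ 2 * H ^ 2 := by nlinarith
  have t1 : a ^ 2 * μ ≤ (1 + ε) * H ^ 2 * μ + K₂ * Λ * H := by nlinarith
  have t2 : N ^ 4 * ε * μ ^ 3 ≤ (δ / 4) * H ^ 2 * μ := by
    have h1 : N ^ 4 * ε * μ ^ 2 ≤ N ^ 4 * ε * (Λ ^ 2 * H ^ 2) :=
      mul_le_mul_of_nonneg_left hμ2 (by positivity)
    have h2 : N ^ 4 * ε * (Λ ^ 2 * H ^ 2) = (δ / 4) * H ^ 2 := by
      linear_combination (H ^ 2 / 4) * hεeq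
    have h3 : N ^ 4 * ε * μ ^ 2 * μ ≤ (δ / 4) * H ^ 2 * μ := by
      have := mul_le_mul_of_nonneg_right (h2 ▸ h1) (le_of_lt hμpos)
      linarith
    nlinarith [h3]
  have t3 : N ^ 3 * K₁ * μ ^ 2 ≤ N ^ 3 * K₁ * Λ ^ 2 * H ^ 2 := by
    have hc : 0 ≤ N ^ 3 * K₁ := by positivity
    nlinarith [mul_le_mul_of_nonneg_left hμ2 hc]
  have t4 : H * μ ^ 2 ≥ (1 + δ) * H ^ 2 * μ := by
    nlinarith [mul_le_mul_of_nonneg_left hμ₁ (by positivity : (0:ℝ) ≤ H * μ)]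
  have hε4 : ε * H ^ 2 * μ ≤ (δ / 4) * H ^ 2 * μ := by
    have hb : 0 ≤ H ^ 2 * μ := by positivity
    have hN2 : (1:ℝ) ≤ N ^ 2 := by nlinarith
    have hN4 : (1:ℝ) ≤ N ^ 4 := by nlinarith [hN2, sq_nonneg (N ^ 2 - 1)]
    have hΛ2 : (1:ℝ) ≤ Λ ^ 2 := by nlinarith
    have h1 : (1:ℝ) ≤ N ^ 4 * Λ ^ 2 := by nlinarith
    have h3 : ε * 4 ≤ ε * (4 * N ^ 4 * Λ ^ 2) := by nlinarith
    nlinarith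
  have expand : N ^ 3 * (N * ε * μ + K₁) * μ ^ 2
      = N ^ 4 * ε * μ ^ 3 + N ^ 3 * K₁ * μ ^ 2 := by ring
  linarith [expand, t1, t2, t3, t4, hε4,
    (by ring : ε * H ^ 2 * μ = (1 + ε) * H ^ 2 * μ - H ^ 2 * μ)]
end

section
/- Let E be a real Hilbert space, let H, μ : E → ℝ be differentiable at a point x with H(x) > 0 and μ(x) > 0, let σ ∈ (0,1), c ≥ 0, K₀ ∈ ℝ, and define f : E → ℝ by f(y) = H(y)^(σ−1)·(μ(y) − c·H(y)) − K₀, where powers denote real exponentiation (Real.rpow). Then ⟪gradient H x, gradient f x⟫ / H(x) ≤ ⟪gradient μ x, gradient f x⟫ / ((1−σ)·μ(x) + σ·c·H(x)). -/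
open scoped RealInnerProductSpace

/-- The inequality `⟨∇H, ∇f_σ⟩/H ≤ ⟨∇μ, ∇f_σ⟩/((1-σ)·μ + σ·c·H)` where
`f_σ = H^(σ-1)·(μ - c·H) - K₀`. -/
theorem gradient_inner_inequality_fsigma {E : Type*} [NormedAddCommGroup E]
    [InnerProductSpace ℝ E] [CompleteSpace E]
    (H μ : E → ℝ) (x : E) (σ c K₀ : ℝ)
    (hH : DifferentiableAt ℝ H x) (hμ : DifferentiableAt ℝ μ x)
    (hHx : 0 < H x) (hμx : 0 < μ x) (hσ : σ ∈ Set.Ioo (0 : ℝ) 1) (hc : 0 ≤ c) :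
    ⟪gradient H x, gradient (fun y => H y ^ (σ - 1) * (μ y - c * H y) - K₀) x⟫ / H x ≤
      ⟪gradient μ x, gradient (fun y => H y ^ (σ - 1) * (μ y - c * H y) - K₀) x⟫ /
        ((1 - σ) * μ x + σ * c * H x) := by
  obtain ⟨hσ0, hσ1⟩ := hσ
  set D : ℝ := (1 - σ) * μ x + σ * c * H x with hD_def
  have hD : 0 < D := by
    have h1 : 0 < (1 - σ) * μ x := mul_pos (by linarith) hμx
    have h2 : 0 ≤ σ * c * H x := mul_nonneg (mul_nonneg hσ0.le hc) hHx.le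
    linarith
  -- derivative of f
  have hA : HasFDerivAt H (fderiv ℝ H x) x := hH.hasFDerivAt
  have hB : HasFDerivAt μ (fderiv ℝ μ x) x := hμ.hasFDerivAt
  set A := fderiv ℝ H x
  set B := fderiv ℝ μ x
  have hpow : HasFDerivAt (fun y => H y ^ (σ - 1))
      (((σ - 1) * H x ^ (σ - 1 - 1)) • A) x := hA.rpow_const (Or.inl hHx.ne')
  have hsub : HasFDerivAt (fun y => μ y - c * H y) (B - c • A) x :=
    hB.sub (hA.const_mul c)
  have hf : HasFDerivAt (fun y => H y ^ (σ - 1) * (μ y - c * H y) - K₀)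
      ((H x ^ (σ - 1)) • (B - c • A) +
        (μ x - c * H x) • (((σ - 1) * H x ^ (σ - 1 - 1)) • A)) x :=
    (hpow.mul hsub).sub_const K₀
  -- gradient of f
  set gH := gradient H x with hgH
  set gμ := gradient μ x with hgμ
  set gf := gradient (fun y => H y ^ (σ - 1) * (μ y - c * H y) - K₀) x with hgf
  have hgrad : gf = (H x ^ (σ - 1)) • (gμ - c • gH) +
      ((μ x - c * H x) * ((σ - 1) * H x ^ (σ - 1 - 1))) • gH := by
    rw [hgf, gradient, hf.fderiv]
    simp only [map_add, map_smul, map_sub, smul_smul]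
    rfl
  -- key vector identity
  have hkey : D • gH = H x • gμ - (H x ^ (2 - σ)) • gf := by
    have e1 : H x ^ (2 - σ) * H x ^ (σ - 1) = H x := by
      rw [← Real.rpow_add hHx, show (2 - σ) + (σ - 1) = (1:ℝ) from by ring, Real.rpow_one]
    have e2 : H x ^ (2 - σ) * H x ^ (σ - 1 - 1) = 1 := by
      rw [← Real.rpow_add hHx, show (2 - σ) + (σ - 1 - 1) = (0:ℝ) from by ring, Real.rpow_zero]
    have e3 : H x ^ (2 - σ) * ((μ x - c * H x) * ((σ - 1) * H x ^ (σ - 1 - 1)))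
        = (μ x - c * H x) * (σ - 1) := by
      rw [show H x ^ (2 - σ) * ((μ x - c * H x) * ((σ - 1) * H x ^ (σ - 1 - 1)))
          = (μ x - c * H x) * (σ - 1) * (H x ^ (2 - σ) * H x ^ (σ - 1 - 1)) from by ring,
        e2, mul_one]
    rw [hgrad, smul_add, smul_smul, smul_smul, e1, e3,
      show D = H x * c - (μ x - c * H x) * (σ - 1) from by rw [hD_def]; ring]
    module
  -- take inner products with gf
  have hinner : D * ⟪gH, gf⟫ = H x * ⟪gμ, gf⟫ - H x ^ (2 - σ) * ⟪gf, gf⟫ := by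
    have := congrArg (fun v => ⟪v, gf⟫) hkey
    simpa [inner_smul_left, inner_sub_left] using this
  have hnn : 0 ≤ H x ^ (2 - σ) * ⟪gf, gf⟫ :=
    mul_nonneg (Real.rpow_nonneg hHx.le _) real_inner_self_nonneg
  rw [div_le_div_iff₀ hHx hD]
  nlinarith [hinner, hnn]
end

section
/- Let E be a real Hilbert space, let H, μ : E → ℝ be differentiable at a point x with H(x) > 0, let σ ∈ (0,1), c ≥ 1, K₀ ≥ 0, and define f : E → ℝ by f(y) = H(y)^(σ−1)·(μ(y) − c·H(y)) − K₀, where powers denote real exponentiation (Real.rpow). If f(x) > 0, then ‖gradient H x‖ / H(x) ≤ (1/(1−σ)) · ( ‖gradient μ x‖ / H(x) + ‖gradient f x‖ / f(x) ). -/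
private lemma fsigma_aux (t h fx K na nb nF σ c : ℝ) (hh : 0 < h) (hth : 0 < t)
    (hfx : 0 < fx) (hK : 0 ≤ K) (hc : 1 ≤ c) (h1σ : 0 < 1 - σ) (hσ0 : 0 ≤ σ)
    (hna : 0 ≤ na) (hnb : 0 ≤ nb) (hnF : 0 ≤ nF)
    (h5 : (1 - σ) * (fx + K) * na + c * (t * h) * na ≤ t * h * nb + h * nF) :
    na / h ≤ (1 / (1 - σ)) * (nb / h + nF / fx) := by
  have key2 : (1 - σ) * fx * na ≤ fx * nb + h * nF := by
    rcases le_total na nb with hab | hab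
    · nlinarith [mul_le_mul_of_nonneg_left hab hfx.le,
        mul_nonneg (mul_nonneg hσ0 hfx.le) hna, mul_nonneg hh.le hnF]
    · nlinarith [mul_nonneg (mul_pos hth hh).le (sub_nonneg.mpr hab),
        mul_nonneg (mul_nonneg h1σ.le hK) hna,
        mul_nonneg (mul_nonneg (sub_nonneg.mpr hc) (mul_pos hth hh).le) hna,
        mul_nonneg hfx.le hnb]
  have hrhs : (1 / (1 - σ)) * (nb / h + nF / fx)
      = (fx * nb + h * nF) / ((1 - σ) * (fx * h)) := by
    field_simp
  rw [hrhs, div_le_div_iff₀ hh (by positivity)]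
  nlinarith [mul_le_mul_of_nonneg_right key2 hh.le]


/-- The estimate `‖∇H‖/H ≤ (1/(1-σ))·(‖∇μ‖/H + ‖∇f_σ‖/f_σ)` on `{f_σ > 0}`,
where `f_σ = H^(σ-1)·(μ - c·H) - K₀`. -/
theorem gradient_norm_inequality_fsigma {E : Type*} [NormedAddCommGroup E]
    [InnerProductSpace ℝ E] [CompleteSpace E]
    (H μ : E → ℝ) (x : E) (σ c K₀ : ℝ)
    (hH : DifferentiableAt ℝ H x) (hμ : DifferentiableAt ℝ μ x)
    (hHx : 0 < H x) (hσ : σ ∈ Set.Ioo (0 : ℝ) 1) (hc : 1 ≤ c) (hK : 0 ≤ K₀)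
    (hfx : 0 < H x ^ (σ - 1) * (μ x - c * H x) - K₀) :
    ‖gradient H x‖ / H x ≤
      (1 / (1 - σ)) *
        (‖gradient μ x‖ / H x +
          ‖gradient (fun y => H y ^ (σ - 1) * (μ y - c * H y) - K₀) x‖ /
            (H x ^ (σ - 1) * (μ x - c * H x) - K₀)) := by
  obtain ⟨hσ0, hσ1⟩ := hσ
  have h1σ : 0 < 1 - σ := by linarith
  have hHne : H x ≠ 0 := ne_of_gt hHx
  have ht : (0:ℝ) < H x ^ (σ - 1) := Real.rpow_pos_of_pos hHx _
  have hs : (0:ℝ) < H x ^ (σ - 1 - 1) := Real.rpow_pos_of_pos hHx _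
  have hst : H x ^ (σ - 1 - 1) * H x = H x ^ (σ - 1) := by
    rw [Real.rpow_sub_one hHne]; field_simp
  have hμc : 0 < μ x - c * H x := by
    by_contra h
    push_neg at h
    nlinarith [mul_nonpos_of_nonneg_of_nonpos ht.le h]
  have hfH : HasFDerivAt H (fderiv ℝ H x) x := hH.hasFDerivAt
  have hfμ : HasFDerivAt μ (fderiv ℝ μ x) x := hμ.hasFDerivAt
  have h1 : HasFDerivAt (fun y => H y ^ (σ - 1))
      (((σ - 1) * H x ^ (σ - 1 - 1)) • fderiv ℝ H x) x :=
    hfH.rpow_const (Or.inl hHne)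
  have h2 : HasFDerivAt (fun y => μ y - c * H y)
      (fderiv ℝ μ x - c • fderiv ℝ H x) x := hfμ.sub (hfH.const_mul c)
  have h3 : HasFDerivAt (fun y => H y ^ (σ - 1) * (μ y - c * H y) - K₀)
      ((H x ^ (σ - 1)) • (fderiv ℝ μ x - c • fderiv ℝ H x)
        + (μ x - c * H x) • (((σ - 1) * H x ^ (σ - 1 - 1)) • fderiv ℝ H x)) x :=
    (h1.mul h2).sub_const K₀
  set a := fderiv ℝ H x with ha
  set b := fderiv ℝ μ x with hb
  set F := (H x ^ (σ - 1)) • (b - c • a)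
        + (μ x - c * H x) • (((σ - 1) * H x ^ (σ - 1 - 1)) • a) with hFdef
  have hga : ‖gradient H x‖ = ‖a‖ :=
    (InnerProductSpace.toDual ℝ E).symm.norm_map _
  have hgb : ‖gradient μ x‖ = ‖b‖ :=
    (InnerProductSpace.toDual ℝ E).symm.norm_map _
  have hgF : ‖gradient (fun y => H y ^ (σ - 1) * (μ y - c * H y) - K₀) x‖ = ‖F‖ := by
    have hf3 : fderiv ℝ (fun y => H y ^ (σ - 1) * (μ y - c * H y) - K₀) x = F := h3.fderiv
    calc ‖gradient (fun y => H y ^ (σ - 1) * (μ y - c * H y) - K₀) x‖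
        = ‖fderiv ℝ (fun y => H y ^ (σ - 1) * (μ y - c * H y) - K₀) x‖ :=
          (InnerProductSpace.toDual ℝ E).symm.norm_map _
      _ = ‖F‖ := by rw [hf3]
  set A : ℝ := (1 - σ) * (H x ^ (σ - 1 - 1) * (μ x - c * H x)) + c * H x ^ (σ - 1) with hAdef
  have hAa : A • a = (H x ^ (σ - 1)) • b - F := by
    rw [hFdef, hAdef]
    module
  have hApos : 0 < A := by
    have hc0 : (0:ℝ) < c := by linarith
    positivity
  have hkey : A * ‖a‖ ≤ H x ^ (σ - 1) * ‖b‖ + ‖F‖ := by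
    calc A * ‖a‖ = ‖A • a‖ := by
          rw [norm_smul, Real.norm_eq_abs, abs_of_pos hApos]
      _ = ‖(H x ^ (σ - 1)) • b - F‖ := by rw [hAa]
      _ ≤ ‖(H x ^ (σ - 1)) • b‖ + ‖F‖ := norm_sub_le _ _
      _ = H x ^ (σ - 1) * ‖b‖ + ‖F‖ := by
          rw [norm_smul, Real.norm_eq_abs, abs_of_pos ht]
  set fx : ℝ := H x ^ (σ - 1) * (μ x - c * H x) - K₀ with hfxdef
  clear_value fx
  clear_value A
  have hP : H x ^ (σ - 1 - 1) * (μ x - c * H x) * H x = fx + K₀ := by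
    rw [hfxdef]
    linear_combination (μ x - c * H x) * hst
  have hexp : A * H x = (1 - σ) * (fx + K₀) + c * (H x ^ (σ - 1) * H x) := by
    rw [hAdef]
    linear_combination (1 - σ) * hP
  have h5 : (1 - σ) * (fx + K₀) * ‖a‖ + c * (H x ^ (σ - 1) * H x) * ‖a‖
      ≤ H x ^ (σ - 1) * H x * ‖b‖ + H x * ‖F‖ := by
    have hkeyH : A * ‖a‖ * H x ≤ (H x ^ (σ - 1) * ‖b‖ + ‖F‖) * H x :=
      mul_le_mul_of_nonneg_right hkey hHx.le
    have e : (1 - σ) * (fx + K₀) * ‖a‖ + c * (H x ^ (σ - 1) * H x) * ‖a‖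
        = A * ‖a‖ * H x := by linear_combination -‖a‖ * hexp
    rw [e]
    calc A * ‖a‖ * H x ≤ (H x ^ (σ - 1) * ‖b‖ + ‖F‖) * H x := hkeyH
      _ = H x ^ (σ - 1) * H x * ‖b‖ + H x * ‖F‖ := by ring
  rw [hga, hgb, hgF]
  exact fsigma_aux (H x ^ (σ - 1)) (H x) fx K₀ ‖a‖ ‖b‖ ‖F‖ σ c hHx ht hfx hK hc h1σ hσ0.le
    (norm_nonneg a) (norm_nonneg b) (norm_nonneg F) h5
end
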